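/- Let G = (N, A) be a directed graph with source s and sink t, let f be a maximum s-t flow with residual graph D_f, let U be the set of nodes reachable from s in D_f and Ū its complement. If a new arc (i,j) with positive capacity is added, where i ∈ U, j ∈ Ū, and there is no directed path from j to t in D_f, then the value of the maximum s-t flow in the augmented network equals the value of the maximum flow in the original network. -/

import Mathlib

/-- A capacitated directed network: `A` is the arc relation, `u` the capacities
(zero off the arc set). -/
structure FlowNetwork (V : Type*) where
  A : V → V → Prop
  u : V → V → ℝ
  cap_nonneg : ∀ i j, 0 ≤ u i j
  cap_zero : ∀ i j, ¬ A i j → u i j = 0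

/-- `f` is a feasible `s`-`t` flow in `N`. -/
structure IsFlow {V : Type*} [Fintype V] (N : FlowNetwork V) (s t : V)
    (f : V → V → ℝ) : Prop where
  nonneg : ∀ i j, 0 ≤ f i j
  le_cap : ∀ i j, f i j ≤ N.u i j
  conserve : ∀ v, v ≠ s → v ≠ t → (∑ w, f v w) = (∑ w, f w v)

/-- The value of a flow: the net flow out of the source `s`. -/
noncomputable def flowValue {V : Type*} [Fintype V] (f : V → V → ℝ) (s : V) : ℝ :=
  (∑ w, f s w) - (∑ w, f w s)

/-- `f` is a maximum `s`-`t` flow in `N`. -/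
def IsMaxFlow {V : Type*} [Fintype V] (N : FlowNetwork V) (s t : V)
    (f : V → V → ℝ) : Prop :=
  IsFlow N s t f ∧ ∀ g, IsFlow N s t g → flowValue g s ≤ flowValue f s

/-- Arc of the residual (auxiliary) graph `D_f`: a forward arc where flow is
below capacity, or a backward arc where flow is positive. -/
def ResidualArc {V : Type*} (N : FlowNetwork V) (f : V → V → ℝ) (i j : V) : Prop :=
  (N.A i j ∧ f i j < N.u i j) ∨ (N.A j i ∧ 0 < f j i)

/-- Reachability in the residual graph `D_f`. -/
def Reaches {V : Type*} (N : FlowNetwork V) (f : V → V → ℝ) (a b : V) : Prop :=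
  Relation.ReflTransGen (ResidualArc N f) a b

/-- The network obtained by adding the new arc `(i,j)` with capacity `c`. -/
def addArc {V : Type*} [DecidableEq V] (N : FlowNetwork V) (i j : V) (c : ℝ)
    (hc : 0 ≤ c) : FlowNetwork V where
  A a b := N.A a b ∨ (a = i ∧ b = j)
  u a b := if a = i ∧ b = j then c else N.u a b
  cap_nonneg a b := by
    try dsimp only
    split
    · exact hc
    · exact N.cap_nonneg a b
  cap_zero a b h := by
    try dsimp only
    rw [if_neg (fun hab => h (Or.inr hab))]
    exact N.cap_zero a b (fun hA => h (Or.inl hA))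

/-- The network obtained by simultaneously adding the arcs of `I`, arc `a ∈ I`
getting capacity `c a`. -/
def addArcs {V : Type*} [DecidableEq V] (N : FlowNetwork V) (I : Finset (V × V))
    (c : V × V → ℝ) (hc : ∀ a ∈ I, 0 ≤ c a) : FlowNetwork V where
  A a b := N.A a b ∨ (a, b) ∈ I
  u a b := if (a, b) ∈ I then c (a, b) else N.u a b
  cap_nonneg a b := by
    try dsimp only
    split
    · next h => exact hc _ h
    · exact N.cap_nonneg a b
  cap_zero a b h := by
    try dsimp only
    rw [if_neg (fun hab => h (Or.inr hab))]
    exact N.cap_zero a b (fun hA => h (Or.inl hA))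


open scoped Classical

-- ==================== auxiliary development ====================

section Aux

variable {V : Type*}

/-- excess of a pseudo-flow at a vertex -/
noncomputable def excess [Fintype V] (F : V → V → ℝ) (v : V) : ℝ :=
  (∑ w, F v w) - (∑ w, F w v)

lemma flowValue_eq_excess [Fintype V] (f : V → V → ℝ) (s : V) :
    flowValue f s = excess f s := rfl

/-- elementary delta for one residual traversal -/
noncomputable def tdelta (N : FlowNetwork V) (f : V → V → ℝ) (a b : V) : V → V → ℝ :=
  if N.A a b ∧ f a b < N.u a b then
    (fun x y => if x = a ∧ y = b then 1 else 0)
  else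
    (fun x y => if x = b ∧ y = a then -1 else 0)

noncomputable def rescap (N : FlowNetwork V) (f : V → V → ℝ) (a b : V) : ℝ :=
  if N.A a b ∧ f a b < N.u a b then N.u a b - f a b else f b a

lemma rescap_pos {N : FlowNetwork V} {f : V → V → ℝ} {a b : V}
    (h : ResidualArc N f a b) : 0 < rescap N f a b := by
  unfold rescap
  split
  · next hfw => linarith [hfw.2]
  · next hnf =>
    rcases h with h | h
    · exact absurd h hnf
    · exact h.2

lemma abs_tdelta_le {N : FlowNetwork V} {f : V → V → ℝ} (a b x y : V) :
    |tdelta N f a b x y| ≤ 1 := by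
  unfold tdelta
  split <;> dsimp only <;> split <;> norm_num

lemma tdelta_pos {N : FlowNetwork V} {f : V → V → ℝ} {a b x y : V}
    (h : 0 < tdelta N f a b x y) :
    a = x ∧ b = y ∧ N.A x y ∧ f x y < N.u x y ∧ rescap N f a b = N.u x y - f x y := by
  unfold tdelta at h
  unfold rescap
  split at h
  · next hfw =>
    dsimp only at h
    split at h
    · next hxy =>
      obtain ⟨hx, hy⟩ := hxy
      subst hx; subst hy
      exact ⟨rfl, rfl, hfw.1, hfw.2, if_pos hfw⟩
    · norm_num at h
  · dsimp only at h
    split at h <;> norm_num at h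

lemma tdelta_neg {N : FlowNetwork V} {f : V → V → ℝ} {a b x y : V}
    (hr : ResidualArc N f a b) (h : tdelta N f a b x y < 0) :
    b = x ∧ a = y ∧ 0 < f x y ∧ rescap N f a b = f x y := by
  unfold tdelta at h
  unfold rescap
  split at h
  · dsimp only at h; split at h <;> norm_num at h
  · next hnf =>
    dsimp only at h
    split at h
    · next hxy =>
      obtain ⟨hx, hy⟩ := hxy
      subst hx; subst hy
      rcases hr with hr | hr
      · exact absurd hr hnf
      · exact ⟨rfl, rfl, hr.2, if_neg hnf⟩
    · norm_num at h

lemma excess_tdelta [Fintype V] (N : FlowNetwork V) (f : V → V → ℝ) (a b v : V) :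
    excess (tdelta N f a b) v
      = (if v = a then (1:ℝ) else 0) - (if v = b then (1:ℝ) else 0) := by
  classical
  unfold excess tdelta
  split
  · dsimp only
    rw [show (∑ w, if v = a ∧ w = b then (1:ℝ) else 0)
          = ∑ w, if w = b then (if v = a then (1:ℝ) else 0) else 0 from
        Finset.sum_congr rfl (by intro w _; by_cases h1 : v = a <;> by_cases h2 : w = b <;>
          simp [h1, h2])]
    rw [show (∑ w, if w = a ∧ v = b then (1:ℝ) else 0)
          = ∑ w, if w = a then (if v = b then (1:ℝ) else 0) else 0 from
        Finset.sum_congr rfl (by intro w _; by_cases h1 : w = a <;> by_cases h2 : v = b <;>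
          simp [h1, h2])]
    simp only [Finset.sum_ite_eq', Finset.mem_univ, if_true] <;> split_ifs <;> ring
  · dsimp only
    rw [show (∑ w, if v = b ∧ w = a then (-1:ℝ) else 0)
          = ∑ w, if w = a then (if v = b then (-1:ℝ) else 0) else 0 from
        Finset.sum_congr rfl (by intro w _; by_cases h1 : v = b <;> by_cases h2 : w = a <;>
          simp [h1, h2])]
    rw [show (∑ w, if w = b ∧ v = a then (-1:ℝ) else 0)
          = ∑ w, if w = b then (if v = a then (-1:ℝ) else 0) else 0 from
        Finset.sum_congr rfl (by intro w _; by_cases h1 : w = b <;> by_cases h2 : v = a <;>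
          simp [h1, h2])]
    simp only [Finset.sum_ite_eq', Finset.mem_univ, if_true] <;> split_ifs <;> ring

/-- list of consecutive pairs of a walk -/
def pairsList : V → List V → List (V × V)
  | _, [] => []
  | a, b :: l => (a, b) :: pairsList b l

lemma pairsList_length (a : V) (l : List V) : (pairsList a l).length = l.length := by
  induction l generalizing a with
  | nil => rfl
  | cons b l ih => simp [pairsList, ih]

lemma mem_pairsList_residual {N : FlowNetwork V} {f : V → V → ℝ} {a : V} {l : List V}
    (hc : List.Chain (ResidualArc N f) a l) {p : V × V} (hp : p ∈ pairsList a l) :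
    ResidualArc N f p.1 p.2 := by
  induction l generalizing a with
  | nil => simp [pairsList] at hp
  | cons b l ih =>
    rcases List.chain_cons.mp hc with ⟨hab, hc'⟩
    simp only [pairsList, List.mem_cons] at hp
    rcases hp with rfl | hp
    · exact hab
    · exact ih hc' hp

noncomputable def Dlist (N : FlowNetwork V) (f : V → V → ℝ) (L : List (V × V)) :
    V → V → ℝ :=
  (L.map (fun p => tdelta N f p.1 p.2)).sum

lemma Dlist_nil (N : FlowNetwork V) (f : V → V → ℝ) : Dlist N f [] = 0 := rfl

lemma Dlist_cons (N : FlowNetwork V) (f : V → V → ℝ) (p : V × V) (L : List (V × V)) :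
    Dlist N f (p :: L) = tdelta N f p.1 p.2 + Dlist N f L := rfl

lemma excess_add [Fintype V] (F G : V → V → ℝ) (v : V) :
    excess (F + G) v = excess F v + excess G v := by
  unfold excess
  simp [Finset.sum_add_distrib]
  ring

lemma excess_Dlist_pairs [Fintype V] (N : FlowNetwork V) (f : V → V → ℝ)
    (a : V) (l : List V) (v : V) :
    excess (Dlist N f (pairsList a l)) v
      = (if v = a then (1:ℝ) else 0)
        - (if v = (a :: l).getLast (List.cons_ne_nil _ _) then (1:ℝ) else 0) := by
  induction l generalizing a with
  | nil =>
    simp [pairsList, Dlist, excess]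
    exact (sub_self _).symm
  | cons b l ih =>
    rw [show pairsList a (b :: l) = (a, b) :: pairsList b l from rfl, Dlist_cons,
      excess_add, excess_tdelta, ih b]
    have : (a :: b :: l).getLast (List.cons_ne_nil _ _)
        = (b :: l).getLast (List.cons_ne_nil _ _) := List.getLast_cons_cons
    rw [this]
    ring

lemma abs_Dlist_le (N : FlowNetwork V) (f : V → V → ℝ) (L : List (V × V)) (x y : V) :
    |Dlist N f L x y| ≤ L.length := by
  induction L with
  | nil => simp [Dlist]
  | cons p L ih =>
    rw [Dlist_cons]
    have h1 := abs_tdelta_le (N := N) (f := f) p.1 p.2 x y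
    calc |(tdelta N f p.1 p.2 + Dlist N f L) x y|
        = |tdelta N f p.1 p.2 x y + Dlist N f L x y| := rfl
      _ ≤ |tdelta N f p.1 p.2 x y| + |Dlist N f L x y| := abs_add_le _ _
      _ ≤ 1 + L.length := add_le_add h1 ih
      _ = (p :: L).length := by simp [add_comm]

lemma Dlist_pos_exists {N : FlowNetwork V} {f : V → V → ℝ} {L : List (V × V)} {x y : V}
    (h : 0 < Dlist N f L x y) : ∃ p ∈ L, 0 < tdelta N f p.1 p.2 x y := by
  induction L with
  | nil => simp [Dlist] at h
  | cons p L ih =>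
    rw [Dlist_cons] at h
    by_cases hp : 0 < tdelta N f p.1 p.2 x y
    · exact ⟨p, List.mem_cons_self, hp⟩
    · have : 0 < Dlist N f L x y := by
        have : tdelta N f p.1 p.2 x y ≤ 0 := le_of_not_gt hp
        have hh : tdelta N f p.1 p.2 x y + Dlist N f L x y = (tdelta N f p.1 p.2 + Dlist N f L) x y := rfl
        simp only [Pi.add_apply] at *
        linarith
      obtain ⟨q, hq, hq2⟩ := ih this
      exact ⟨q, List.mem_cons_of_mem _ hq, hq2⟩

lemma Dlist_neg_exists {N : FlowNetwork V} {f : V → V → ℝ} {L : List (V × V)} {x y : V}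
    (h : Dlist N f L x y < 0) : ∃ p ∈ L, tdelta N f p.1 p.2 x y < 0 := by
  induction L with
  | nil => simp [Dlist] at h
  | cons p L ih =>
    rw [Dlist_cons] at h
    by_cases hp : tdelta N f p.1 p.2 x y < 0
    · exact ⟨p, List.mem_cons_self, hp⟩
    · have : Dlist N f L x y < 0 := by
        have : 0 ≤ tdelta N f p.1 p.2 x y := le_of_not_gt hp
        simp only [Pi.add_apply] at *
        linarith
      obtain ⟨q, hq, hq2⟩ := ih this
      exact ⟨q, List.mem_cons_of_mem _ hq, hq2⟩

end Aux

section Cut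

variable {V : Type*} [Fintype V] [DecidableEq V]

lemma excess_smul_add (f D : V → V → ℝ) (ε : ℝ) (v : V) :
    excess (fun x y => f x y + ε * D x y) v = excess f v + ε * excess D v := by
  unfold excess
  rw [Finset.sum_add_distrib, Finset.sum_add_distrib, ← Finset.mul_sum, ← Finset.mul_sum]
  ring

lemma cut_formula (N : FlowNetwork V) (s t : V) (g : V → V → ℝ) (hg : IsFlow N s t g)
    (S : Finset V) (hs : s ∈ S) (ht : t ∉ S) :
    flowValue g s = ∑ a ∈ S, ∑ b ∈ Sᶜ, (g a b - g b a) := by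
  classical
  have h1 : flowValue g s = ∑ v ∈ S, ((∑ w, g v w) - (∑ w, g w v)) := by
    rw [Finset.sum_eq_single_of_mem s hs]
    · rfl
    · intro v hv hvs
      have hvt : v ≠ t := fun h => ht (h ▸ hv)
      rw [hg.conserve v hvs hvt, sub_self]
  rw [h1]
  have h2 : ∀ v, (∑ w, g v w) - (∑ w, g w v)
      = ((∑ w ∈ S, g v w) - (∑ w ∈ S, g w v)) + ∑ w ∈ Sᶜ, (g v w - g w v) := by
    intro v
    rw [← Finset.sum_add_sum_compl S (fun w => g v w),
      ← Finset.sum_add_sum_compl S (fun w => g w v), Finset.sum_sub_distrib]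
    ring
  rw [Finset.sum_congr rfl (fun v _ => h2 v), Finset.sum_add_distrib,
    Finset.sum_sub_distrib, Finset.sum_comm (s := S) (t := S) (f := fun v w => g v w)]
  simp

lemma weak_duality (N : FlowNetwork V) (s t : V) (g : V → V → ℝ) (hg : IsFlow N s t g)
    (S : Finset V) (hs : s ∈ S) (ht : t ∉ S) :
    flowValue g s ≤ ∑ a ∈ S, ∑ b ∈ Sᶜ, N.u a b := by
  rw [cut_formula N s t g hg S hs ht]
  refine Finset.sum_le_sum fun a _ => Finset.sum_le_sum fun b _ => ?_
  have := hg.le_cap a b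
  have := hg.nonneg b a
  linarith

lemma no_augmenting_path (N : FlowNetwork V) (s t : V) (hst : s ≠ t)
    (f : V → V → ℝ) (hf : IsMaxFlow N s t f) : ¬ Reaches N f s t := by
  classical
  intro h
  obtain ⟨l, hchain, hlast⟩ := List.exists_isChain_cons_of_relationReflTransGen h
  set L := pairsList s l with hL
  have hLne : L ≠ [] := by
    cases l with
    | nil => exact absurd hlast hst
    | cons b l' => simp [hL, pairsList]
  have hmemres : ∀ p ∈ L, ResidualArc N f p.1 p.2 := fun p hp =>
    mem_pairsList_residual hchain hp
  -- the minimum residual capacity along the walk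
  set caps : Finset ℝ := L.toFinset.image (fun p => rescap N f p.1 p.2) with hcaps
  have hcapsne : caps.Nonempty := by
    obtain ⟨p, hp⟩ := List.exists_mem_of_ne_nil L hLne
    exact ⟨rescap N f p.1 p.2, Finset.mem_image.mpr ⟨p, List.mem_toFinset.mpr hp, rfl⟩⟩
  set m : ℝ := caps.min' hcapsne with hm
  have hm_pos : 0 < m := by
    obtain ⟨x, hx, hxe⟩ := Finset.mem_image.mp (caps.min'_mem hcapsne)
    rw [hm, ← hxe]
    exact rescap_pos (hmemres x (List.mem_toFinset.mp hx))
  have hm_le : ∀ p ∈ L, m ≤ rescap N f p.1 p.2 := fun p hp =>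
    caps.min'_le _ (Finset.mem_image.mpr ⟨p, List.mem_toFinset.mpr hp, rfl⟩)
  set k : ℝ := (L.length : ℝ) with hk
  have hk_pos : 0 < k := by
    have : L ≠ [] := hLne
    have h2 : 0 < L.length := List.length_pos_iff.mpr hLne
    rw [hk]
    exact_mod_cast h2
  set ε : ℝ := m / k with he
  have hε_pos : 0 < ε := div_pos hm_pos hk_pos
  have hεk : ε * k = m := by rw [he]; field_simp
  set D := Dlist N f L with hD
  set g : V → V → ℝ := fun x y => f x y + ε * D x y with hg
  have hDk : ∀ x y, |D x y| ≤ k := fun x y => abs_Dlist_le N f L x y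
  have hεD : ∀ x y, ε * D x y ≤ m := by
    intro x y
    calc ε * D x y ≤ ε * k := by
          have := (abs_le.mp (hDk x y)).2
          nlinarith
      _ = m := hεk
  have hεD' : ∀ x y, -m ≤ ε * D x y := by
    intro x y
    have h1 : -k ≤ D x y := (abs_le.mp (hDk x y)).1
    nlinarith [hε_pos.le, hεk]
  -- feasibility
  have hflow : IsFlow N s t g := by
    refine ⟨?_, ?_, ?_⟩
    · intro x y
      by_cases hneg : D x y < 0
      · obtain ⟨p, hp, hpneg⟩ := Dlist_neg_exists hneg
        obtain ⟨_, _, hpos, hcap⟩ := tdelta_neg (hmemres p hp) hpneg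
        have := hm_le p hp
        rw [hcap] at this
        have := hεD' x y
        simp only [hg]
        linarith
      · have hD0 : 0 ≤ D x y := le_of_not_gt hneg
        have := hf.1.nonneg x y
        simp only [hg]
        nlinarith
    · intro x y
      by_cases hpos : 0 < D x y
      · obtain ⟨p, hp, hppos⟩ := Dlist_pos_exists hpos
        obtain ⟨_, _, _, hlt, hcap⟩ := tdelta_pos hppos
        have := hm_le p hp
        rw [hcap] at this
        have := hεD x y
        simp only [hg]
        linarith
      · have hD0 : D x y ≤ 0 := le_of_not_gt hpos
        have := hf.1.le_cap x y
        simp only [hg]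
        nlinarith
    · intro v hvs hvt
      have hx : excess g v = excess f v + ε * excess D v := by
        rw [hg]; exact excess_smul_add f D ε v
      have hEf : excess f v = 0 := by
        unfold excess; rw [hf.1.conserve v hvs hvt, sub_self]
      have hED : excess D v = 0 := by
        rw [hD, hL, excess_Dlist_pairs, hlast, if_neg hvs, if_neg hvt, sub_zero]
      have : excess g v = 0 := by rw [hx, hEf, hED]; ring
      unfold excess at this
      linarith
  -- the value increased
  have hval : flowValue g s = flowValue f s + ε := by
    rw [flowValue_eq_excess, flowValue_eq_excess]
    have hx : excess g s = excess f s + ε * excess D s := by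
      rw [hg]; exact excess_smul_add f D ε s
    have hED : excess D s = 1 := by
      rw [hD, hL, excess_Dlist_pairs, hlast, if_pos rfl, if_neg hst, sub_zero]
    rw [hx, hED, mul_one]
  have := hf.2 g hflow
  rw [hval] at this
  linarith

end Cut

/-- adding a single arc `(i,j)` with positive capacity where
`i ∈ U`, `j ∉ U`, and there is no residual path from `j` to `t`, does not
change the maximum flow value. -/
theorem stmt2 {V : Type*} [Fintype V] [DecidableEq V]
    (N : FlowNetwork V) (s t : V) (hst : s ≠ t)
    (f : V → V → ℝ) (hf : IsMaxFlow N s t f)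
    (i j : V) (hij : ¬ N.A i j) (c : ℝ) (hc : 0 < c)
    (hi : Reaches N f s i) (hj : ¬ Reaches N f s j)
    (hjt : ¬ Reaches N f j t)
    (f' : V → V → ℝ) (hf' : IsMaxFlow (addArc N i j c hc.le) s t f') :
    flowValue f' s = flowValue f s := by
  classical
  set N' := addArc N i j c hc.le with hN'
  set S : Finset V := Finset.univ.filter (fun v => ¬ Reaches N f v t) with hS
  have hmem : ∀ v, v ∈ S ↔ ¬ Reaches N f v t := by
    intro v; simp [hS]
  have hsS : s ∈ S := (hmem s).mpr (no_augmenting_path N s t hst f hf)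
  have htS : t ∉ S := by
    rw [hmem]
    simp only [not_not]
    exact Relation.ReflTransGen.refl
  have hjS : j ∈ S := (hmem j).mpr hjt
  -- the cut (S, Sᶜ) is saturated by f
  have hsat : ∀ a ∈ S, ∀ b ∈ Sᶜ, f a b - f b a = N.u a b := by
    intro a ha b hb
    have hat : ¬ Reaches N f a t := (hmem a).mp ha
    have hbt : Reaches N f b t := by
      have := Finset.mem_compl.mp hb
      rw [hmem] at this
      exact not_not.mp this
    have hnores : ¬ ResidualArc N f a b := fun hres =>
      hat (Relation.ReflTransGen.head hres hbt)
    have h1 : f a b = N.u a b := by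
      rcases le_or_gt (N.u a b) (f a b) with h | h
      · exact le_antisymm (hf.1.le_cap a b) h
      · by_cases hA : N.A a b
        · exact absurd (Or.inl ⟨hA, h⟩) hnores
        · have := N.cap_zero a b hA
          have := hf.1.nonneg a b
          linarith [hf.1.le_cap a b]
    have h2 : f b a = 0 := by
      rcases eq_or_lt_of_le (hf.1.nonneg b a) with h | h
      · exact h.symm
      · by_cases hA : N.A b a
        · exact absurd (Or.inr ⟨hA, h⟩) hnores
        · have := N.cap_zero b a hA
          linarith [hf.1.le_cap b a]
    rw [h1, h2, sub_zero]
  have hval : flowValue f s = ∑ a ∈ S, ∑ b ∈ Sᶜ, N.u a b := by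
    rw [cut_formula N s t f hf.1 S hsS htS]
    exact Finset.sum_congr rfl fun a ha =>
      Finset.sum_congr rfl fun b hb => hsat a ha b hb
  -- f is feasible in N'
  have hfN' : IsFlow N' s t f := by
    refine ⟨hf.1.nonneg, ?_, hf.1.conserve⟩
    intro x y
    show f x y ≤ (if x = i ∧ y = j then c else N.u x y)
    split
    · next hxy =>
      obtain ⟨rfl, rfl⟩ := hxy
      have := N.cap_zero x y hij
      have := hf.1.le_cap x y
      linarith
    · exact hf.1.le_cap x y
  have hle1 : flowValue f s ≤ flowValue f' s := hf'.2 f hfN'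
  -- weak duality for f' over the same cut, whose N'-capacity equals its N-capacity
  have hle2 : flowValue f' s ≤ ∑ a ∈ S, ∑ b ∈ Sᶜ, N'.u a b :=
    weak_duality N' s t f' hf'.1 S hsS htS
  have hcapeq : ∑ a ∈ S, ∑ b ∈ Sᶜ, N'.u a b = ∑ a ∈ S, ∑ b ∈ Sᶜ, N.u a b := by
    refine Finset.sum_congr rfl fun a ha => Finset.sum_congr rfl fun b hb => ?_
    have hbj : b ≠ j := fun h => (Finset.mem_compl.mp hb) (h ▸ hjS)
    show (if a = i ∧ b = j then c else N.u a b) = N.u a b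
    rw [if_neg (fun hab => hbj hab.2)]
  rw [hcapeq, ← hval] at hle2
  linarith
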